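/- For a positive integer m, define f_m(x) = 1 − x/(2m) for 0 ≤ x ≤ m and f_m(x) = (m+1)/(2x+2) for x ≥ m. Then for all real x, y with x ≥ m and 1 ≤ y ≤ x, one has f_m(x−y) − f_m(x) ≥ y(m+1)/(2x(x+1)). -/

import Mathlib

theorem stmt_12 (m : ℕ) (hm : 0 < m) (f : ℝ → ℝ)
    (hf : ∀ x : ℝ, f x = if x ≤ m then 1 - x / (2 * m) else (m + 1) / (2 * x + 2)) :
    ∀ x y : ℝ, (m : ℝ) ≤ x → 1 ≤ y → y ≤ x →
      y * (m + 1) / (2 * x * (x + 1)) ≤ f (x - y) - f x := by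
  intro x y hx hy1 hyx
  have hm1 : (1:ℝ) ≤ (m:ℝ) := by exact_mod_cast hm
  have hxpos : (0:ℝ) < x := lt_of_lt_of_le (by linarith) hx
  have hx1 : (0:ℝ) < x + 1 := by linarith
  have hfx : f x = ((m:ℝ) + 1) / (2 * x + 2) := by
    rw [hf]
    split_ifs with h
    · have hxm : x = m := le_antisymm h hx
      subst hxm
      have : (m:ℝ) ≠ 0 := by positivity
      field_simp
      ring
    · rfl
  rw [hfx, hf]
  by_cases h : x - y ≤ (m:ℝ)
  · rw [if_pos h]
    have h0 : (0:ℝ) ≤ x - y := by linarith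
    have key : (x - y) * (x + (m:ℝ) + 1) ≤ 2 * m * x := by
      nlinarith [mul_nonneg h0 (sub_nonneg.mpr h), ((m:ℝ) - (x - y)) ,
        mul_nonneg (sub_nonneg.mpr h) (by linarith : (0:ℝ) ≤ x - 1 - (x - y))]
    have hmpos : (0:ℝ) < (m:ℝ) := by linarith
    rw [show (1 - (x - y) / (2 * (m:ℝ))) - ((m:ℝ)+1)/(2*x+2)
        = ((2*(m:ℝ) - (x-y))*(2*x+2) - ((m:ℝ)+1)*(2*(m:ℝ))) / ((2*(m:ℝ))*(2*x+2)) from by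
      field_simp]
    rw [div_le_div_iff₀ (by positivity) (by positivity)]
    nlinarith [mul_le_mul_of_nonneg_right key (by positivity : (0:ℝ) ≤ 2 * (x+1)),
      mul_pos hxpos hx1, mul_pos hmpos hxpos]
  · rw [if_neg h]
    push_neg at h
    have hxy : (0:ℝ) < x - y := by linarith
    rw [div_sub_div _ _ (by linarith : (2*(x-y)+2) ≠ 0) (by linarith : (2*x+2) ≠ (0:ℝ)),
      div_le_div_iff₀ (by nlinarith [mul_pos hxpos hx1]) (mul_pos (by linarith) (by linarith))]
    nlinarith [mul_nonneg (mul_nonneg (mul_nonneg (by linarith : (0:ℝ) ≤ y)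
      (by positivity : (0:ℝ) ≤ (m:ℝ)+1)) (by linarith : (0:ℝ) ≤ x+1)) (by linarith : (0:ℝ) ≤ y-1)]
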